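/- Let x₁, x₂ be elements of a complex unital Banach algebra A and α ∈ ℂ with α ≠ 0 such that x₁x₂ = α(x₁ + x₂). If x₁ is Drazin invertible and x₁ + x₂ is Drazin invertible, then x₂ is Drazin invertible with x₂^d = (1/α)·(x₁+x₂)^d·x₁. -/

import Mathlib

/-- `b` is a Drazin inverse of `a`. -/
def IsDrazinInverse {A : Type*} [Ring A] (a b : A) : Prop :=
  a * b = b * a ∧ b * a * b = b ∧ ∃ n : ℕ, (a * (1 - a * b)) ^ n = 0


section Aux
variable {R : Type*} [Ring R]

lemma idem_pow (a c : R) (hc : c * c = c) (hac : a * c = c * a) :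
    ∀ j : ℕ, (a * c) ^ (j + 1) = a ^ (j + 1) * c := by
  intro j
  induction j with
  | zero => simp
  | succ j ih =>
    rw [pow_succ (a*c) (j+1), ih, pow_succ a (j+1)]
    rw [mul_assoc (a ^ (j+1)) c (a*c), ← mul_assoc c a c, ← hac, mul_assoc a c c, hc, ← mul_assoc]

/-- If `s` is a Drazin inverse of `σ` and `c` commutes with `σ`, then `c` commutes with `s`. -/
lemma commuteDrazin (σ s c : R) (h1 : σ * s = s * σ) (h2 : s * σ * s = s) (K : ℕ)
    (h3 : (σ * (1 - σ * s)) ^ (K + 1) = 0) (hc : c * σ = σ * c) : s * c = c * s := by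
  have h2' : s * (σ * s) = s := by rw [← mul_assoc]; exact h2
  have hPs : (σ * s) * s = s := by rw [h1]; exact h2
  have hPP : (σ * s) * (σ * s) = σ * s := by rw [mul_assoc, h2']
  have hPσ : (σ * s) * σ = σ * (σ * s) := by rw [mul_assoc, ← h1]
  have hcσ : ∀ j : ℕ, c * σ ^ j = σ ^ j * c := fun j => (Commute.pow_right hc j)
  have hidem : (1 - σ * s) * (1 - σ * s) = 1 - σ * s := by
    have e1 : (1 - σ * s) * (1 - σ * s) = 1 - σ*s - ((σ*s) - (σ*s)*(σ*s)) := by noncomm_ring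
    rw [e1, hPP]; abel
  have hcomm1 : σ * (1 - σ * s) = (1 - σ * s) * σ := by
    rw [mul_sub, sub_mul, mul_one, one_mul, hPσ]
  have hσ1P : σ ^ (K+1) * (1 - σ * s) = 0 := by
    rw [← idem_pow σ (1 - σ*s) hidem hcomm1 K]; exact h3
  have h1P : (1 - σ * s) * σ ^ (K+1) = 0 := by
    have h' : (1 - σ*s) * σ^(K+1) = σ^(K+1) * (1 - σ*s) := by
      rw [mul_sub, sub_mul, mul_one, one_mul, (Commute.pow_left hPσ.symm (K+1)).eq]
    rw [h', hσ1P]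
  have hp2 : ∀ j : ℕ, σ ^ (j+1) * s ^ (j+1) = σ * s := by
    intro j; induction j with
    | zero => simp
    | succ j ih =>
      rw [pow_succ' σ (j+1), pow_succ s (j+1), mul_assoc,
        ← mul_assoc (σ^(j+1)) (s^(j+1)) s, ih, hPs]
  have hp3 : ∀ j : ℕ, s ^ (j+1) * σ ^ (j+1) = σ * s := by
    intro j; induction j with
    | zero => simpa using h1.symm
    | succ j ih =>
      rw [pow_succ' s (j+1), pow_succ σ (j+1), mul_assoc,
        ← mul_assoc (s^(j+1)) (σ^(j+1)) σ, ih, hPσ, ← mul_assoc, ← h1, hPP]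
  -- (σ*s) commutes with c
  have hPc1 : (σ * s) * (c * (1 - σ * s)) = 0 := by
    nth_rewrite 1 [← hp3 K]
    rw [mul_assoc, ← mul_assoc (σ^(K+1)) c _, ← hcσ, mul_assoc c (σ^(K+1)) _, hσ1P,
      mul_zero, mul_zero]
  have hPc2 : (1 - σ * s) * (c * (σ * s)) = 0 := by
    nth_rewrite 2 [← hp2 K]
    rw [← mul_assoc c (σ^(K+1)) _, hcσ, mul_assoc (σ^(K+1)) c _, ← mul_assoc,
      h1P, zero_mul]
  have hPc : (σ * s) * c = c * (σ * s) := by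
    have e1 : (σ*s) * (c * (1 - σ*s)) = (σ*s)*c - (σ*s)*c*(σ*s) := by noncomm_ring
    have e2 : (1 - σ*s) * (c * (σ*s)) = c*(σ*s) - (σ*s)*c*(σ*s) := by noncomm_ring
    have q1 : (σ*s)*c = (σ*s)*c*(σ*s) := by
      have := hPc1; rw [e1] at this; exact sub_eq_zero.mp this
    have q2 : c*(σ*s) = (σ*s)*c*(σ*s) := by
      have := hPc2; rw [e2] at this; exact sub_eq_zero.mp this
    rw [q1, q2]
  have stepA : s * (c * (1 - σ * s)) = 0 := by
    nth_rewrite 1 [← h2']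
    rw [mul_assoc, hPc1, mul_zero]
  have stepA' : s * c = s * (c * (σ * s)) := by
    have e3 : s * (c * (1 - σ*s)) = s*c - s*(c*(σ*s)) := by noncomm_ring
    rw [e3] at stepA; exact sub_eq_zero.mp stepA
  have stepB : s * (c * (σ * s)) = c * s := by
    rw [← mul_assoc c σ s, hc, ← mul_assoc, ← mul_assoc, ← h1, hPc, mul_assoc, hPs]
  rw [stepA', stepB]

/-- Core lemma: if `e*f = e+f`, `e` is Drazin invertible and `e+f` is Drazin invertible,
then `f*e = e+f` as well. -/
lemma lemA (e f d s : R) (m K : ℕ)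
    (hef : e * f = e + f)
    (hed : e * d = d * e)
    (hded : d * e * d = d)
    (hm : (e * (1 - e * d)) ^ (m + 1) = 0)
    (hws : (e + f) * s = s * (e + f))
    (hss : s * (e + f) * s = s)
    (hK : ((e + f) * (1 - (e + f) * s)) ^ (K + 1) = 0) :
    f * e = e + f := by
  set w : R := e + f with hw0
  -- basic facts about p := e*d
  have h_de : d * e = e * d := hed.symm
  have h_dp : d * (e*d) = d := by rw [← mul_assoc]; exact hded
  have h_pp : (e*d) * (e*d) = e*d := by rw [mul_assoc, h_dp]
  have h_pd : (e*d) * d = d := by rw [hed]; exact hded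
  have h_pe : (e*d) * e = e * (e*d) := by rw [mul_assoc, h_de, ← mul_assoc]
  -- basic facts about P := w*s
  have hss' : s * (w * s) = s := by rw [← mul_assoc]; exact hss
  have h_PP : (w*s) * (w*s) = w*s := by rw [mul_assoc, hss']
  have h_Ps : (w*s) * s = s := by rw [hws]; exact hss
  have h_sP : s * (w*s) = s := hss'
  have h_Pw : (w*s) * w = w * (w*s) := by rw [mul_assoc, ← hws]
  -- idempotent complements
  have h_idem_p : (1 - e*d) * (1 - e*d) = 1 - e*d := by
    have e1 : (1 - e*d) * (1 - e*d) = 1 - e*d - ((e*d) - (e*d)*(e*d)) := by noncomm_ring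
    rw [e1, h_pp]; abel
  have h_idem_P : (1 - w*s) * (1 - w*s) = 1 - w*s := by
    have e1 : (1 - w*s) * (1 - w*s) = 1 - w*s - ((w*s) - (w*s)*(w*s)) := by noncomm_ring
    rw [e1, h_PP]; abel
  have h_ecomm : e * (1 - e*d) = (1 - e*d) * e := by
    rw [mul_sub, sub_mul, mul_one, one_mul, h_pe]
  have h_wcomm : w * (1 - w*s) = (1 - w*s) * w := by
    rw [mul_sub, sub_mul, mul_one, one_mul, h_Pw]
  -- u := e - 1, v := f - 1
  set u : R := e - 1 with hu
  set v : R := f - 1 with hv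
  have h_uv : u * v = 1 := by
    have e1 : u * v = e*f - e - f + 1 := by rw [hu, hv]; noncomm_ring
    rw [e1, hef, hw0]; abel
  have h_uf : u * f = e := by
    have e1 : u * f = e*f - f := by rw [hu]; noncomm_ring
    rw [e1, hef, hw0]; abel
  have h_uw : u * w = e * e := by
    have e1 : u * w = e*e + e*f - e - f := by rw [hu, hw0]; noncomm_ring
    rw [e1, hef, hw0]; abel
  -- powers
  have ceu : Commute e u := by
    rw [hu]; exact (Commute.refl e).sub_right (Commute.one_right e)
  have ce2u : Commute (e*e) u := ceu.mul_left ceu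
  have h_uwpow : ∀ j : ℕ, u^j * w^j = (e*e)^j := by
    intro j; induction j with
    | zero => simp
    | succ j ih =>
      rw [pow_succ u j, pow_succ' w j, mul_assoc (u^j) u _, ← mul_assoc u w (w^j), h_uw,
        ← mul_assoc, ← (ce2u.pow_right j).eq, mul_assoc, ih, ← pow_succ']
  have h_e2P : (e*e)^(K+1) * (1 - w*s) = 0 := by
    rw [← h_uwpow (K+1), mul_assoc, ← idem_pow w (1 - w*s) h_idem_P h_wcomm K, hK, mul_zero]
  have h_dj : ∀ j : ℕ, d^(j+1) * e^(j+1) = e*d := by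
    intro j; induction j with
    | zero => simpa using h_de
    | succ j ih =>
      rw [pow_succ' d (j+1), pow_succ e (j+1), mul_assoc, ← mul_assoc (d^(j+1)) (e^(j+1)) e,
        ih, h_pe, ← mul_assoc, h_de, h_pp]
  have h_p1P : (e*d) * (1 - w*s) = 0 := by
    have hA : d^(2*K+1+1) * e^(2*K+1+1) = e*d := h_dj (2*K+1)
    have hB : e^(2*K+1+1) * (1 - w*s) = 0 := by
      have hexp : 2*K+1+1 = 2*(K+1) := by ring
      rw [hexp, pow_mul, pow_two]; exact h_e2P
    calc (e*d)*(1-w*s) = (d^(2*K+1+1) * e^(2*K+1+1)) * (1-w*s) := by rw [hA]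
      _ = d^(2*K+1+1) * (e^(2*K+1+1) * (1-w*s)) := by rw [mul_assoc]
      _ = 0 := by rw [hB, mul_zero]
  -- the Z-recursion : (1 - e*d)*s = 0
  have hfwe : f = w - e := by rw [hw0]; abel
  have h_1pw : (1 - e*d)*w = (e*(1-e*d))*f := by
    rw [← hef, ← mul_assoc, ← h_ecomm]
  have h_ne : (e*(1-e*d))*e = (e*e)*(1-e*d) := by
    rw [mul_assoc, ← h_ecomm, ← mul_assoc]
  have h_nes : ((e*(1-e*d))*e)*s = ((e*(1-e*d))*e)*((1-e*d)*s) := by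
    rw [h_ne, mul_assoc (e*e) (1-e*d) s, mul_assoc (e*e) (1-e*d) ((1-e*d)*s),
      ← mul_assoc (1-e*d) (1-e*d) s, h_idem_p]
  have h_ns : (e*(1-e*d))*s = (e*(1-e*d))*((1-e*d)*s) := by
    rw [mul_assoc e (1-e*d) s, mul_assoc e (1-e*d) ((1-e*d)*s),
      ← mul_assoc (1-e*d) (1-e*d) s, h_idem_p]
  have hY : ((e*(1-e*d))*f)*s = (e*(1-e*d))*(w*s) - ((e*(1-e*d))*e)*s := by
    rw [hfwe]; noncomm_ring
  have hZr : (1-e*d)*s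
      = (e*(1-e*d))*((1-e*d)*s) - ((e*(1-e*d))*e)*(((1-e*d)*s)*s) := by
    calc (1-e*d)*s
        = (1-e*d)*(s*(w*s)) := by rw [hss']
      _ = (1-e*d)*((w*s)*s) := by rw [← mul_assoc s w s, ← hws]
      _ = (((1-e*d)*w)*s)*s := by rw [← mul_assoc, ← mul_assoc]
      _ = (((e*(1-e*d))*f)*s)*s := by rw [h_1pw]
      _ = ((e*(1-e*d))*(w*s))*s - (((e*(1-e*d))*e)*s)*s := by rw [hY, sub_mul]
      _ = (e*(1-e*d))*((w*s)*s) - (((e*(1-e*d))*e)*((1-e*d)*s))*s := by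
          rw [mul_assoc, h_nes]
      _ = (e*(1-e*d))*s - ((e*(1-e*d))*e)*(((1-e*d)*s)*s) := by
          rw [h_Ps, mul_assoc (e*(1-e*d)*e) ((1-e*d)*s) s]
      _ = (e*(1-e*d))*((1-e*d)*s) - ((e*(1-e*d))*e)*(((1-e*d)*s)*s) := by rw [h_ns]
  have cen : Commute e (e*(1-e*d)) := by
    unfold Commute SemiconjBy
    rw [← mul_assoc, mul_assoc e (1-e*d) e, ← h_ecomm, ← mul_assoc]
  have hZj : ∀ j : ℕ, ∃ X : R, (1-e*d)*s = (e*(1-e*d))^j * X := by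
    intro j; induction j with
    | zero => exact ⟨(1-e*d)*s, by rw [pow_zero, one_mul]⟩
    | succ j ih =>
      obtain ⟨X, hX⟩ := ih
      refine ⟨X - e*(X*s), ?_⟩
      have t1 : (e*(1-e*d))*((e*(1-e*d))^j*X) = (e*(1-e*d))^(j+1)*X := by
        rw [← mul_assoc, ← pow_succ']
      have t2 : ((e*(1-e*d))*e)*(((e*(1-e*d))^j*X)*s)
          = (e*(1-e*d))^(j+1)*(e*(X*s)) := by
        rw [mul_assoc (e*(1-e*d)) e _, mul_assoc ((e*(1-e*d))^j) X s,
          ← mul_assoc e ((e*(1-e*d))^j) (X*s), (cen.pow_right j).eq,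
          mul_assoc ((e*(1-e*d))^j) e (X*s), ← mul_assoc, ← pow_succ']
      rw [hZr, hX, t1, t2, ← mul_sub]
  have hZ0 : (1-e*d)*s = 0 := by
    obtain ⟨X, hX⟩ := hZj (m+1)
    rw [hX, hm, zero_mul]
  have h_ps : (e*d)*s = s := by
    have e1 : (1-e*d)*s = s - (e*d)*s := by noncomm_ring
    rw [e1] at hZ0
    exact (sub_eq_zero.mp hZ0).symm
  -- (1 - e*d)*(w*s) = 0, hence  w*s = e*d
  have h_nes0 : ((e*(1-e*d))*e)*s = 0 := by rw [h_nes, hZ0, mul_zero]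
  have h_1pPY : (1-e*d)*(w*s) = ((e*(1-e*d))*f)*s := by
    rw [← mul_assoc, h_1pw]
  have hYnP : ((e*(1-e*d))*f)*s = (e*(1-e*d))*(w*s) := by
    rw [hY, h_nes0, sub_zero]
  have h_nP : (e*(1-e*d))*(w*s) = (e*(1-e*d))*((1-e*d)*(w*s)) := by
    rw [mul_assoc, mul_assoc, ← mul_assoc (1-e*d) (1-e*d) (w*s), h_idem_p]
  have h_rec2 : (1-e*d)*(w*s) = (e*(1-e*d))*((1-e*d)*(w*s)) := by
    calc (1-e*d)*(w*s) = (e*(1-e*d))*f*s := h_1pPY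
      _ = (e*(1-e*d))*(w*s) := hYnP
      _ = (e*(1-e*d))*((1-e*d)*(w*s)) := h_nP
  have h_iter2 : ∀ j : ℕ, (1-e*d)*(w*s) = (e*(1-e*d))^j * ((1-e*d)*(w*s)) := by
    intro j; induction j with
    | zero => rw [pow_zero, one_mul]
    | succ j ih =>
      calc (1-e*d)*(w*s) = (e*(1-e*d))^j * ((1-e*d)*(w*s)) := ih
        _ = (e*(1-e*d))^j * ((e*(1-e*d))*((1-e*d)*(w*s))) := by rw [← h_rec2]
        _ = (e*(1-e*d))^(j+1) * ((1-e*d)*(w*s)) := by rw [← mul_assoc, ← pow_succ]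
  have h_1pP0 : (1-e*d)*(w*s) = 0 := by
    rw [h_iter2 (m+1), hm, zero_mul]
  have h_Peq : w*s = e*d := by
    have q1 : w*s = (e*d)*(w*s) := by
      have e1 : (1-e*d)*(w*s) = w*s - (e*d)*(w*s) := by noncomm_ring
      rw [e1] at h_1pP0
      exact sub_eq_zero.mp h_1pP0
    have q2 : e*d = (e*d)*(w*s) := by
      have e1 : (e*d)*(1-w*s) = e*d - (e*d)*(w*s) := by noncomm_ring
      rw [e1] at h_p1P
      exact sub_eq_zero.mp h_p1P
    rw [q1, ← q2]
  -- p := e*d now equals P := w*s ; commutation helpers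
  have h_sp2 : s*(e*d) = s := by rw [← h_Peq]; exact h_sP
  have h_pw2 : (e*d)*w = w*(e*d) := by rw [← h_Peq]; exact h_Pw
  have h_pf : (e*d)*f = f*(e*d) := by
    rw [hfwe, mul_sub, sub_mul, h_pw2, h_pe]
  have h_pu : (e*d)*u = u*(e*d) := by
    rw [hu, mul_sub, sub_mul, mul_one, one_mul, h_pe]
  have h_pv : (e*d)*v = v*(e*d) := by
    rw [hv, mul_sub, sub_mul, mul_one, one_mul, h_pf]
  -- q := 1 - v*u is killed by p
  have h_uq : u*(v*u) = u := by rw [← mul_assoc, h_uv, one_mul]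
  have heu : e = u + 1 := by rw [hu]; abel
  have hfv : f = v + 1 := by rw [hv]; abel
  have h_e1q : e*(1 - v*u) = 1 - v*u := by
    have e1 : e*(1-v*u) = u - u*(v*u) + (1 - v*u) := by rw [heu]; noncomm_ring
    rw [e1, h_uq]; abel
  have h_ekq : ∀ j : ℕ, e^j*(1 - v*u) = 1 - v*u := by
    intro j; induction j with
    | zero => rw [pow_zero, one_mul]
    | succ j ih => rw [pow_succ', mul_assoc, ih, h_e1q]
  have h_pq : (e*d)*(1 - v*u) = 1 - v*u := by
    have h1 : (1-e*d)*(1-v*u) = 0 := by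
      calc (1-e*d)*(1-v*u) = (1-e*d)*(e^(m+1)*(1-v*u)) := by rw [h_ekq (m+1)]
        _ = ((1-e*d)*e^(m+1))*(1-v*u) := by rw [← mul_assoc]
        _ = (e^(m+1)*(1-e*d))*(1-v*u) := by
            rw [← ((Commute.pow_left (h_ecomm : Commute e (1-e*d)) (m+1)).eq)]
        _ = ((e*(1-e*d))^(m+1))*(1-v*u) := by
            rw [← idem_pow e (1-e*d) h_idem_p h_ecomm m]
        _ = 0 := by rw [hm, zero_mul]
    have e1 : (1-e*d)*(1-v*u) = (1-v*u) - (e*d)*(1-v*u) := by noncomm_ring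
    rw [e1] at h1
    exact (sub_eq_zero.mp h1).symm
  -- the corner argument
  have h_dw : d*w = (e*d)*f := by rw [← hef, ← mul_assoc, h_de]
  have c0 : d*(w*(e*d)) = f*(e*d) := by
    rw [← mul_assoc, h_dw, h_pf, mul_assoc, h_pp]
  have hpF : (e*d)*(s*(e*(e*d))) = s*(e*(e*d)) := by rw [← mul_assoc, h_ps]
  have claim1 : (f*(e*d))*(s*(e*(e*d))) = e*d := by
    rw [← c0, mul_assoc d (w*(e*d)) (s*(e*(e*d))), mul_assoc w (e*d) (s*(e*(e*d))), hpF,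
      ← mul_assoc w s (e*(e*d)), h_Peq, ← mul_assoc d (e*d) (e*(e*d)), h_dp,
      ← mul_assoc d e (e*d), h_de, h_pp]
  have claim5 : (u*(e*d))*(f*(e*d)) = e*(e*d) := by
    rw [mul_assoc u (e*d) (f*(e*d)), ← mul_assoc (e*d) f (e*d), h_pf,
      mul_assoc f (e*d) (e*d), h_pp, ← mul_assoc u f (e*d), h_uf]
  have claim6 : u*(e*d) = (e*(e*d))*(s*(e*(e*d))) := by
    calc u*(e*d) = (u*(e*d))*(e*d) := by rw [mul_assoc, h_pp]
      _ = (u*(e*d))*((f*(e*d))*(s*(e*(e*d)))) := by rw [claim1]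
      _ = ((u*(e*d))*(f*(e*d)))*(s*(e*(e*d))) := by rw [← mul_assoc]
      _ = (e*(e*d))*(s*(e*(e*d))) := by rw [claim5]
  have claim7 : ((f*(e*d))*d)*(u*(e*d)) = e*d := by
    calc ((f*(e*d))*d)*(u*(e*d))
        = ((f*(e*d))*d)*((e*(e*d))*(s*(e*(e*d)))) := by rw [claim6]
      _ = (f*(e*d))*((d*(e*(e*d)))*(s*(e*(e*d)))) := by
          rw [mul_assoc (f*(e*d)) d ((e*(e*d))*(s*(e*(e*d)))),
            ← mul_assoc d (e*(e*d)) (s*(e*(e*d)))]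
      _ = (f*(e*d))*((e*d)*(s*(e*(e*d)))) := by
          rw [← mul_assoc d e (e*d), h_de, h_pp]
      _ = (f*(e*d))*(s*(e*(e*d))) := by rw [hpF]
      _ = e*d := claim1
  have claim8 : (u*(e*d))*(v*(e*d)) = e*d := by
    rw [mul_assoc u (e*d) (v*(e*d)), ← mul_assoc (e*d) v (e*d), h_pv,
      mul_assoc v (e*d) (e*d), h_pp, ← mul_assoc u v (e*d), h_uv, one_mul]
  have c9a : v*(e*d) = (e*d)*(v*(e*d)) := by
    rw [← mul_assoc (e*d) v (e*d), h_pv, mul_assoc v (e*d) (e*d), h_pp]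
  have claim9 : v*(e*d) = (f*(e*d))*d := by
    calc v*(e*d) = (e*d)*(v*(e*d)) := c9a
      _ = (((f*(e*d))*d)*(u*(e*d)))*(v*(e*d)) := by rw [claim7]
      _ = ((f*(e*d))*d)*((u*(e*d))*(v*(e*d))) := by rw [mul_assoc]
      _ = ((f*(e*d))*d)*(e*d) := by rw [claim8]
      _ = (f*(e*d))*(d*(e*d)) := by rw [mul_assoc]
      _ = (f*(e*d))*d := by rw [h_dp]
  have claim10 : (v*(e*d))*(u*(e*d)) = e*d := by rw [claim9]; exact claim7
  have claim11 : (v*u)*(e*d) = e*d := by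
    have h' : (v*(e*d))*(u*(e*d)) = (v*u)*(e*d) := by
      rw [mul_assoc v (e*d) (u*(e*d)), ← mul_assoc (e*d) u (e*d), h_pu,
        mul_assoc u (e*d) (e*d), h_pp, ← mul_assoc]
    exact h'.symm.trans claim10
  have claim12 : (1 - v*u)*(e*d) = 0 := by
    have e1 : (1-v*u)*(e*d) = e*d - (v*u)*(e*d) := by noncomm_ring
    rw [e1, claim11, sub_self]
  have claim13 : (e*d)*(1 - v*u) = (1 - v*u)*(e*d) := by
    have hpvu : (e*d)*(v*u) = (v*u)*(e*d) := by
      rw [← mul_assoc, h_pv, mul_assoc, h_pu, ← mul_assoc]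
    have e1 : (e*d)*(1 - v*u) = e*d - (e*d)*(v*u) := by noncomm_ring
    have e2 : (1 - v*u)*(e*d) = e*d - (v*u)*(e*d) := by noncomm_ring
    rw [e1, e2, hpvu]
  have hq0 : (1:R) - v*u = 0 := by
    calc (1:R) - v*u = (e*d)*(1-v*u) := h_pq.symm
      _ = (1-v*u)*(e*d) := claim13
      _ = 0 := claim12
  have hvu : v*u = 1 := (sub_eq_zero.mp hq0).symm
  have hfe : f*e = v*u + v + u + 1 := by rw [hfv, heu]; noncomm_ring
  rw [hfe, hvu, hu, hv, hw0]; abel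
end Aux


theorem stmt_2 {A : Type*} [NormedRing A] [NormedAlgebra ℂ A] [CompleteSpace A]
    (x₁ x₂ b₁ s : A) (α : ℂ) (hα : α ≠ 0) (h12 : x₁ * x₂ = α • (x₁ + x₂))
    (h1 : IsDrazinInverse x₁ b₁) (hs : IsDrazinInverse (x₁ + x₂) s) :
    IsDrazinInverse x₂ (α⁻¹ • (s * x₁)) := by
  obtain ⟨hb1, hb2, n1, hb3⟩ := h1
  obtain ⟨hs1, hs2, ns, hs3⟩ := hs
  set σ : A := x₁ + x₂ with hσ
  have hα' : α⁻¹ * α = 1 := inv_mul_cancel₀ hα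
  have hα'' : α * α⁻¹ = 1 := mul_inv_cancel₀ hα
  have hsum : α⁻¹ • x₁ + α⁻¹ • x₂ = α⁻¹ • σ := by rw [hσ, smul_add]
  -- hypotheses of the core lemma
  have t1 : (α⁻¹ • x₁) * (α • b₁) = x₁ * b₁ := by
    rw [smul_mul_assoc, mul_smul_comm, smul_smul, hα', one_smul]
  have t2 : (α • b₁) * (α⁻¹ • x₁) = b₁ * x₁ := by
    rw [smul_mul_assoc, mul_smul_comm, smul_smul, hα'', one_smul]
  have u1 : (α⁻¹ • σ) * (α • s) = σ * s := by
    rw [smul_mul_assoc, mul_smul_comm, smul_smul, hα', one_smul]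
  have u2 : (α • s) * (α⁻¹ • σ) = s * σ := by
    rw [smul_mul_assoc, mul_smul_comm, smul_smul, hα'', one_smul]
  have h_ef : (α⁻¹ • x₁) * (α⁻¹ • x₂) = α⁻¹ • x₁ + α⁻¹ • x₂ := by
    rw [smul_mul_assoc, mul_smul_comm, smul_smul, h12, smul_smul, mul_assoc, hα', mul_one, hsum]
  have h_ed : (α⁻¹ • x₁) * (α • b₁) = (α • b₁) * (α⁻¹ • x₁) := by
    rw [t1, t2]; exact hb1
  have h_ded : (α • b₁) * (α⁻¹ • x₁) * (α • b₁) = α • b₁ := by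
    rw [t2, mul_smul_comm, hb2]
  have h_m : ((α⁻¹ • x₁) * (1 - (α⁻¹ • x₁) * (α • b₁))) ^ (n1 + 1) = 0 := by
    rw [t1, smul_mul_assoc, smul_pow, pow_succ (x₁*(1-x₁*b₁)) n1, hb3, zero_mul, smul_zero]
  have h_ws : (α⁻¹ • x₁ + α⁻¹ • x₂) * (α • s) = (α • s) * (α⁻¹ • x₁ + α⁻¹ • x₂) := by
    rw [hsum, u1, u2]; exact hs1
  have h_ss : (α • s) * (α⁻¹ • x₁ + α⁻¹ • x₂) * (α • s) = α • s := by
    rw [hsum, u2, mul_smul_comm, hs2]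
  have h_K : ((α⁻¹ • x₁ + α⁻¹ • x₂) * (1 - (α⁻¹ • x₁ + α⁻¹ • x₂) * (α • s))) ^ (ns + 1) = 0 := by
    rw [hsum, u1, smul_mul_assoc, smul_pow, pow_succ (σ*(1-σ*s)) ns, hs3, zero_mul, smul_zero]
  have hfe := lemA (α⁻¹ • x₁) (α⁻¹ • x₂) (α • b₁) (α • s) n1 ns h_ef h_ed h_ded h_m h_ws h_ss h_K
  -- conclude x₂ * x₁ = α • σ
  have l1 : (α⁻¹ • x₂) * (α⁻¹ • x₁) = (α⁻¹ * α⁻¹) • (x₂ * x₁) := by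
    rw [smul_mul_assoc, mul_smul_comm, smul_smul]
  rw [l1, hsum] at hfe
  have h21 : x₂ * x₁ = α • σ := by
    have hcg := congrArg (fun z : A => (α * α) • z) hfe
    simp only [smul_smul] at hcg
    have s1 : α * α * (α⁻¹ * α⁻¹) = 1 := by
      rw [mul_assoc, ← mul_assoc α α⁻¹ α⁻¹, hα'', one_mul, hα'']
    have s2 : α * α * α⁻¹ = α := by rw [mul_assoc, hα'', mul_one]
    rw [s1, s2, one_smul] at hcg
    exact hcg
  have h12' : x₁ * x₂ = x₂ * x₁ := h12.trans h21.symm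
  -- s commutes with x₁ and x₂
  have hσ3 : (σ * (1 - σ * s)) ^ (ns + 1) = 0 := by rw [pow_succ, hs3, zero_mul]
  have hcσ1 : x₁ * σ = σ * x₁ := by
    rw [hσ, mul_add, add_mul, h12']
  have hcσ2 : x₂ * σ = σ * x₂ := by
    rw [hσ, mul_add, add_mul, ← h12']
  have hcs1 : s * x₁ = x₁ * s := commuteDrazin σ s x₁ hs1 hs2 ns hσ3 hcσ1
  have hcs2 : s * x₂ = x₂ * s := commuteDrazin σ s x₂ hs1 hs2 ns hσ3 hcσ2
  -- the three Drazin conditions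
  have r1 : (α⁻¹ • (s * x₁)) * x₂ = s * σ := by
    rw [smul_mul_assoc, mul_assoc, h12, mul_smul_comm, smul_smul, hα', one_smul]
  have r2 : x₂ * (α⁻¹ • (s * x₁)) = s * σ := by
    rw [mul_smul_comm, ← mul_assoc, ← hcs2, mul_assoc, h21, mul_smul_comm, smul_smul,
      hα', one_smul]
  refine ⟨?_, ?_, ?_⟩
  · rw [r1, r2]
  · rw [r1, mul_smul_comm, ← mul_assoc, hs2]
  · have hxb : x₂ * (α⁻¹ • (s * x₁)) = σ * s := r2.trans hs1.symm
    rw [hxb]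
    have hidem : (1 - σ * s) * (1 - σ * s) = 1 - σ * s := by
      have hPP : (σ*s)*(σ*s) = σ*s := by
        rw [mul_assoc, ← mul_assoc s σ s, hs2]
      have e1 : (1 - σ*s)*(1 - σ*s) = 1 - σ*s - ((σ*s) - (σ*s)*(σ*s)) := by noncomm_ring
      rw [e1, hPP]; abel
    have cx12 : Commute x₁ x₂ := h12'
    have cx1σ : Commute x₁ σ := hcσ1
    have cx2σ : Commute x₂ σ := hcσ2
    have cx1s : Commute x₁ s := hcs1.symm
    have cx2s : Commute x₂ s := hcs2.symm
    have cσs : Commute σ s := hs1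
    have cc1 : Commute x₁ (1 - σ*s) := (Commute.one_right x₁).sub_right (cx1σ.mul_right cx1s)
    have cc2 : Commute x₂ (1 - σ*s) := (Commute.one_right x₂).sub_right (cx2σ.mul_right cx2s)
    have ccσ : Commute σ (1 - σ*s) :=
      (Commute.one_right σ).sub_right ((Commute.refl σ).mul_right cσs)
    have hsum2 : x₁*(1-σ*s) + x₂*(1-σ*s) = σ*(1-σ*s) := by rw [← add_mul, ← hσ]
    have hmul : (x₁*(1-σ*s))*(x₂*(1-σ*s)) = α • (σ*(1-σ*s)) := by
      calc (x₁*(1-σ*s))*(x₂*(1-σ*s))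
          = x₁*(((1-σ*s)*x₂)*(1-σ*s)) := by
            rw [mul_assoc, ← mul_assoc (1-σ*s) x₂ (1-σ*s)]
        _ = x₁*((x₂*(1-σ*s))*(1-σ*s)) := by rw [← cc2.eq]
        _ = x₁*(x₂*((1-σ*s)*(1-σ*s))) := by rw [mul_assoc x₂ (1-σ*s) (1-σ*s)]
        _ = (x₁*x₂)*(1-σ*s) := by rw [hidem, ← mul_assoc]
        _ = α • (σ*(1-σ*s)) := by rw [h12, smul_mul_assoc]
    have h1n : (1-σ*s)*(σ*(1-σ*s)) = σ*(1-σ*s) := by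
      rw [← mul_assoc, ← ccσ.eq, mul_assoc, hidem]
    have e1 : (x₁*(1-σ*s))*(x₁*(1-σ*s))
        = (x₁*(1-σ*s))*(σ*(1-σ*s)) - (x₁*(1-σ*s))*(x₂*(1-σ*s)) := by
      rw [← hsum2]; noncomm_ring
    have e3 : (x₁*(1-σ*s) - α•(1-σ*s))*(σ*(1-σ*s))
        = (x₁*(1-σ*s))*(σ*(1-σ*s)) - α•((1-σ*s)*(σ*(1-σ*s))) := by
      rw [sub_mul, smul_mul_assoc]
    have ha2 : (x₁*(1-σ*s))*(x₁*(1-σ*s)) = (x₁*(1-σ*s) - α•(1-σ*s))*(σ*(1-σ*s)) := by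
      rw [e1, hmul, e3, h1n]
    have hnbnil : IsNilpotent (σ*(1-σ*s)) := ⟨ns, hs3⟩
    have ca_nb : Commute (x₁*(1-σ*s)) (σ*(1-σ*s)) :=
      Commute.mul_left (cx1σ.mul_right cc1)
        ((ccσ.symm).mul_right (Commute.refl (1-σ*s)))
    have csm : Commute (α•(1-σ*s)) (σ*(1-σ*s)) := by
      unfold Commute SemiconjBy
      rw [smul_mul_assoc, mul_smul_comm,
        (((ccσ.symm).mul_right (Commute.refl (1-σ*s))).eq)]
    have cA'nb : Commute (x₁*(1-σ*s) - α•(1-σ*s)) (σ*(1-σ*s)) := ca_nb.sub_left csm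
    have h2nil : IsNilpotent ((x₁*(1-σ*s))*(x₁*(1-σ*s))) := by
      rw [ha2]; exact cA'nb.isNilpotent_mul_left hnbnil
    have hanil : IsNilpotent (x₁*(1-σ*s)) := by
      obtain ⟨t, ht⟩ := h2nil
      exact ⟨2*t, by rw [pow_mul, pow_two, ht]⟩
    have hbnil : IsNilpotent (x₂*(1-σ*s)) := by
      have hb_eq : x₂*(1-σ*s) = σ*(1-σ*s) - x₁*(1-σ*s) := by rw [← hsum2]; abel
      rw [hb_eq]
      exact Commute.isNilpotent_sub ca_nb.symm hnbnil hanil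
    exact hbnil
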